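/- arXiv:2602.07331 — 2 statements merged into one kernel-verified Lean document; each statement's English description precedes it below -/
import Mathlib

section
/- Let G be a cubic, matching covered, bipartite graph with a tight cut ∂(X) such that ∂(X) is an induced matching consisting of exactly 3 edges, and let G₁ and G₂ be the two tight cut contractions associated with ∂(X). If G₁ and G₂ are both cycle-conformal, then G is cycle-conformal. -/
open SimpleGraph

/-- A graph has a perfect matching. -/
def hasPM {V : Type*} (G : SimpleGraph V) : Prop :=
  ∃ M : G.Subgraph, M.IsPerfectMatching

/-- The graph obtained from `G` by deleting the vertices in `s`. -/
def delVerts {V : Type*} (G : SimpleGraph V) (s : Set V) : SimpleGraph ↥(sᶜ) :=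
  G.induce sᶜ

/-- A graph is cycle-conformal if it has a perfect matching and deleting the
vertex set of any even cycle leaves a graph with a perfect matching. -/
def cycleConformal {V : Type*} (G : SimpleGraph V) : Prop :=
  hasPM G ∧ ∀ (v : V) (c : G.Walk v v), c.IsCycle → Even c.length →
    hasPM (delVerts G {x | x ∈ c.support})

/-- A graph is matching covered if it has at least 4 vertices, is connected,
has a perfect matching, and every edge lies in some perfect matching. -/
def matchingCovered {V : Type*} (G : SimpleGraph V) : Prop :=
  4 ≤ Nat.card V ∧ G.Connected ∧ hasPM G ∧
    ∀ e ∈ G.edgeSet, ∃ M : G.Subgraph, M.IsPerfectMatching ∧ e ∈ M.edgeSet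

/-- The edge cut `∂(X)`: edges of `G` with exactly one endpoint in `X`. -/
def cutSet {V : Type*} (G : SimpleGraph V) (X : Set V) : Set (Sym2 V) :=
  {e | ∃ a b : V, e = s(a, b) ∧ G.Adj a b ∧ a ∈ X ∧ b ∉ X}

/-- A cut `∂(X)` is tight if every perfect matching of `G` contains exactly
one of its edges. -/
def tightCut {V : Type*} (G : SimpleGraph V) (X : Set V) : Prop :=
  ∀ M : G.Subgraph, M.IsPerfectMatching →
    ∃! e : Sym2 V, e ∈ M.edgeSet ∧ e ∈ cutSet G X

/-- The tight cut contraction `G[X ↦ c]`: the set `X` is contracted to the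
single new vertex `Sum.inr ()`, loops and parallel edges being removed. -/
def contractSet {V : Type*} (G : SimpleGraph V) (X : Set V) :
    SimpleGraph ({v : V // v ∉ X} ⊕ Unit) :=
  SimpleGraph.fromRel (fun a b =>
    (∃ u w : {v : V // v ∉ X}, a = Sum.inl u ∧ b = Sum.inl w ∧ G.Adj u w) ∨
    (∃ (u : {v : V // v ∉ X}) (x : V), x ∈ X ∧ a = Sum.inl u ∧ b = Sum.inr () ∧
      G.Adj u x))

namespace TCCaux

variable {V : Type*} {G : SimpleGraph V} {Y : Set V}

lemma cut_mem_iff {u w : V} :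
    s(u, w) ∈ cutSet G Y ↔ G.Adj u w ∧ ((u ∈ Y ∧ w ∉ Y) ∨ (w ∈ Y ∧ u ∉ Y)) := by
  constructor
  · rintro ⟨a, b, he, hadj, ha, hb⟩
    rw [Sym2.eq_iff] at he
    rcases he with ⟨rfl, rfl⟩ | ⟨rfl, rfl⟩
    · exact ⟨hadj, Or.inl ⟨ha, hb⟩⟩
    · exact ⟨hadj.symm, Or.inr ⟨ha, hb⟩⟩
  · rintro ⟨hadj, ⟨hu, hw⟩ | ⟨hw, hu⟩⟩
    · exact ⟨u, w, rfl, hadj, hu, hw⟩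
    · exact ⟨w, u, Sym2.eq_swap, hadj.symm, hw, hu⟩

lemma cutSet_compl : cutSet G Yᶜ = cutSet G Y := by
  ext e
  induction e using Sym2.ind with
  | _ u w =>
    rw [cut_mem_iff, cut_mem_iff]
    simp only [Set.mem_compl_iff, not_not]
    tauto

lemma tightCut_compl (h : tightCut G Y) : tightCut G Yᶜ := by
  unfold tightCut at *
  rw [cutSet_compl]
  exact h

lemma cut_subset_edgeSet {e : Sym2 V} (he : e ∈ cutSet G Y) : e ∈ G.edgeSet := by
  obtain ⟨a, b, rfl, hadj, -, -⟩ := he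
  exact hadj

lemma contract_adj_inl {u w : V} (hu : u ∉ Y) (hw : w ∉ Y) (h : G.Adj u w) :
    (contractSet G Y).Adj (Sum.inl ⟨u, hu⟩) (Sum.inl ⟨w, hw⟩) := by
  rw [contractSet, fromRel_adj]
  refine ⟨by simp [Subtype.ext_iff, h.ne], Or.inl (Or.inl ⟨⟨u, hu⟩, ⟨w, hw⟩, rfl, rfl, h⟩)⟩

lemma contract_adj_inr {u x : V} (hu : u ∉ Y) (hx : x ∈ Y) (h : G.Adj u x) :
    (contractSet G Y).Adj (Sum.inl ⟨u, hu⟩) (Sum.inr ()) := by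
  rw [contractSet, fromRel_adj]
  exact ⟨by simp, Or.inl (Or.inr ⟨⟨u, hu⟩, x, hx, rfl, rfl, h⟩)⟩

lemma adj_of_contract_inl {u w : {v : V // v ∉ Y}}
    (h : (contractSet G Y).Adj (Sum.inl u) (Sum.inl w)) : G.Adj u.1 w.1 := by
  rw [contractSet, fromRel_adj] at h
  rcases h.2 with (⟨u', w', hu, hw, hadj⟩ | ⟨u', x, hx, hu, hw, hadj⟩) |
    (⟨u', w', hu, hw, hadj⟩ | ⟨u', x, hx, hu, hw, hadj⟩)
  · obtain rfl := Sum.inl_injective hu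
    obtain rfl := Sum.inl_injective hw
    exact hadj
  · simp at hw
  · obtain rfl := Sum.inl_injective hu
    obtain rfl := Sum.inl_injective hw
    exact hadj.symm
  · simp at hw

lemma exists_cutpartner_of_contract_inr {u : {v : V // v ∉ Y}}
    (h : (contractSet G Y).Adj (Sum.inl u) (Sum.inr ())) :
    ∃ x ∈ Y, G.Adj u.1 x := by
  rw [contractSet, fromRel_adj] at h
  rcases h.2 with (⟨u', w', hu, hw, hadj⟩ | ⟨u', x, hx, hu, hw, hadj⟩) |
    (⟨u', w', hu, hw, hadj⟩ | ⟨u', x, hx, hu, hw, hadj⟩)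
  · cases hw
  · cases hu; exact ⟨x, hx, hadj⟩
  · cases hu
  · cases hw

open Classical in
noncomputable def cpi (Y : Set V) (v : V) : {v : V // v ∉ Y} ⊕ Unit :=
  if h : v ∈ Y then Sum.inr () else Sum.inl ⟨v, h⟩

lemma cpi_of_not_mem {v : V} (h : v ∉ Y) : cpi Y v = Sum.inl ⟨v, h⟩ := dif_neg h

lemma cpi_ne_inr {v : V} (h : v ∉ Y) : cpi Y v ≠ Sum.inr () := by
  rw [cpi_of_not_mem h]; simp

lemma cpi_injOn {u w : V} (hu : u ∉ Y) (hw : w ∉ Y) (h : cpi Y u = cpi Y w) : u = w := by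
  rw [cpi_of_not_mem hu, cpi_of_not_mem hw] at h
  simpa [Subtype.ext_iff] using h

noncomputable def liftW : ∀ {u v : V} (p : G.Walk u v) (hu : u ∉ Y) (hv : v ∉ Y),
    (∀ w ∈ p.support, w ∉ Y) →
      (contractSet G Y).Walk (Sum.inl ⟨u, hu⟩) (Sum.inl ⟨v, hv⟩)
  | _, _, Walk.nil, _, _, _ => Walk.nil
  | _, _, Walk.cons h q, hu, hv, hp =>
      Walk.cons (contract_adj_inl hu (hp _ (by simp)) h)
        (liftW q (hp _ (by simp)) hv (fun w hw => hp w (by simp [hw])))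

lemma length_liftW : ∀ {u v : V} (p : G.Walk u v) (hu : u ∉ Y) (hv : v ∉ Y)
    (hp : ∀ w ∈ p.support, w ∉ Y), (liftW p hu hv hp).length = p.length
  | _, _, Walk.nil, _, _, _ => rfl
  | _, _, Walk.cons h q, hu, hv, hp => by
      simp only [liftW, Walk.length_cons, length_liftW]

lemma support_liftW : ∀ {u v : V} (p : G.Walk u v) (hu : u ∉ Y) (hv : v ∉ Y)
    (hp : ∀ w ∈ p.support, w ∉ Y),
    (liftW p hu hv hp).support = p.support.map (cpi Y)
  | _, _, Walk.nil, hu, _, _ => by simp [liftW, cpi_of_not_mem hu]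
  | _, _, Walk.cons h q, hu, hv, hp => by
      simp only [liftW, Walk.support_cons, support_liftW, List.map_cons,
        cpi_of_not_mem hu]

lemma edges_liftW : ∀ {u v : V} (p : G.Walk u v) (hu : u ∉ Y) (hv : v ∉ Y)
    (hp : ∀ w ∈ p.support, w ∉ Y),
    (liftW p hu hv hp).edges = p.edges.map (Sym2.map (cpi Y))
  | _, _, Walk.nil, _, _, _ => rfl
  | _, _, @Walk.cons _ _ u w' v h q, hu, hv, hp => by
      simp only [liftW, Walk.edges_cons, edges_liftW, List.map_cons, Sym2.map_pair_eq,
        cpi_of_not_mem hu, cpi_of_not_mem (hp w' (by simp))]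

/-- An edge of the graph toggles `Y`-membership iff it is a cut edge. -/
lemma adj_cut_iff {u w : V} (h : G.Adj u w) :
    s(u, w) ∈ cutSet G Y ↔ ¬ (u ∈ Y ↔ w ∈ Y) := by
  rw [cut_mem_iff]
  tauto

/-- If a walk uses no cut edge, every support vertex is outside `Y`
provided the start is. -/
lemma stay_out {u v : V} (p : G.Walk u v) (hu : u ∉ Y)
    (hp : ∀ e ∈ p.edges, e ∉ cutSet G Y) : ∀ w ∈ p.support, w ∉ Y := by
  induction p with
  | nil => intro w hw; rw [Walk.support_nil, List.mem_singleton] at hw; exact hw ▸ hu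
  | @cons a b c h q ih =>
    have hb : b ∉ Y := by
      intro hbY
      exact hp s(a, b) (by simp) (cut_mem_iff.2 ⟨h, Or.inr ⟨hbY, hu⟩⟩)
    intro w hw
    rw [Walk.support_cons, List.mem_cons] at hw
    rcases hw with rfl | hw
    · exact hu
    · exact ih hb (fun e he => hp e (by simp [he])) w hw

/-- All edges of a walk staying outside `Y` avoid the cut. -/
lemma edges_not_cut_out {u v : V} (p : G.Walk u v)
    (hp : ∀ w ∈ p.support, w ∉ Y) : ∀ e ∈ p.edges, e ∉ cutSet G Y := by
  intro e he
  induction e using Sym2.ind with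
  | _ x y =>
    intro hcut
    rcases cut_mem_iff.1 hcut with ⟨-, ⟨hx, -⟩ | ⟨hy, -⟩⟩
    · exact hp x (p.fst_mem_support_of_mem_edges he) hx
    · exact hp y (p.snd_mem_support_of_mem_edges he) hy

/-- All edges of a walk staying inside `Y` avoid the cut. -/
lemma edges_not_cut_in {u v : V} (p : G.Walk u v)
    (hp : ∀ w ∈ p.support, w ∈ Y) : ∀ e ∈ p.edges, e ∉ cutSet G Y := by
  intro e he
  induction e using Sym2.ind with
  | _ x y =>
    intro hcut
    rcases cut_mem_iff.1 hcut with ⟨-, ⟨-, hy⟩ | ⟨-, hx⟩⟩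
    · exact hy (hp y (p.snd_mem_support_of_mem_edges he))
    · exact hx (hp x (p.fst_mem_support_of_mem_edges he))

/-- First crossing decomposition. -/
lemma first_cross {u v : V} (p : G.Walk u v) (hu : u ∉ Y) (hv : v ∈ Y) :
    ∃ (b₁ a₁ : V) (_ : b₁ ∉ Y) (_ : a₁ ∈ Y) (hadj : G.Adj b₁ a₁)
      (q₁ : G.Walk u b₁) (q₂ : G.Walk a₁ v),
      p = q₁.append (Walk.cons hadj q₂) ∧ (∀ w ∈ q₁.support, w ∉ Y) := by
  induction p with
  | nil => exact absurd hv hu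
  | @cons a b c h q ih =>
    by_cases hb : b ∈ Y
    · exact ⟨a, b, hu, hb, h, Walk.nil, q, by rw [Walk.nil_append], by
        intro w hw; rw [Walk.support_nil, List.mem_singleton] at hw; exact hw ▸ hu⟩
    · obtain ⟨b₁, a₁, hb₁, ha₁, hadj, q₁, q₂, hdec, hq₁⟩ := ih hb hv
      refine ⟨b₁, a₁, hb₁, ha₁, hadj, Walk.cons h q₁, q₂, ?_, ?_⟩
      · rw [Walk.cons_append, hdec]
      · intro w hw
        rw [Walk.support_cons, List.mem_cons] at hw
        rcases hw with rfl | hw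
        · exact hu
        · exact hq₁ w hw

/-- Parity of the number of cut edges along a walk. -/
lemma parity_cut_count [DecidablePred (· ∈ cutSet G Y)] {u v : V} (p : G.Walk u v) :
    Even (p.edges.filter (· ∈ cutSet G Y)).length ↔ (u ∈ Y ↔ v ∈ Y) := by
  induction p with
  | nil => simp
  | @cons a b c h q ih =>
    rw [Walk.edges_cons]
    by_cases hc : s(a, b) ∈ cutSet G Y
    · rw [List.filter_cons_of_pos (by simpa using hc)]
      have := (adj_cut_iff h).1 hc
      simp only [List.length_cons, Nat.even_add_one, ih]
      tauto
    · rw [List.filter_cons_of_neg (by simpa using hc)]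
      have := (adj_cut_iff h).not.1 hc
      rw [not_not] at this
      rw [ih]
      tauto

/-- Walk parity vs proper 2-coloring. -/
lemma even_length_iff_color_eq (col : G.Coloring (Fin 2)) {u v : V} (p : G.Walk u v) :
    Even p.length ↔ col u = col v := by
  induction p with
  | nil => simp
  | @cons a b c h q ih =>
    have hab : col a ≠ col b := col.valid h
    rw [Walk.length_cons, Nat.even_add_one, ih]
    revert hab
    generalize col a = x; generalize col b = y; generalize col c = z
    revert x y z; decide

/-- The counting lemma: both colors are balanced on the `Y`-side except for
the endpoint of the matching edge crossing the tight cut. -/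
lemma count_lemma [Finite V] (col : G.Coloring (Fin 2)) (ht : tightCut G Y)
    {M : G.Subgraph} (hM : M.IsPerfectMatching) {a b : V}
    (heM : s(a, b) ∈ M.edgeSet) (ha : a ∈ Y) (hb : b ∉ Y) (j : Fin 2)
    (hj : j ≠ col a) :
    (Y ∩ col ⁻¹' {col a}).ncard = (Y ∩ col ⁻¹' {j}).ncard + 1 := by
  classical
  obtain ⟨prt, hprt⟩ := Classical.axiomOfChoice
    (fun v => (Subgraph.isPerfectMatching_iff.1 hM v).exists)
  have huniq : ∀ v w, M.Adj v w → w = prt v := by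
    intro v w hw
    obtain ⟨w', hw', hwu⟩ := Subgraph.isPerfectMatching_iff.1 hM v
    rw [hwu w hw, hwu _ (hprt v)]
  obtain ⟨e₀, he₀, he₀u⟩ := ht M hM
  have hab_cut : s(a, b) ∈ cutSet G Y :=
    cut_mem_iff.2 ⟨M.adj_sub (Subgraph.mem_edgeSet.1 heM), Or.inl ⟨ha, hb⟩⟩
  have he0 : e₀ = s(a, b) := (he₀u s(a,b) ⟨heM, hab_cut⟩).symm
  subst he0
  have hprt_a : prt a = b := (huniq a b (Subgraph.mem_edgeSet.1 heM)).symm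
  set S : Set V := Y \ {a} with hS
  have hprt_invol : ∀ v, prt (prt v) = v := fun v => (huniq _ _ (hprt v).symm).symm
  have hprt_mem : ∀ x ∈ S, prt x ∈ S := by
    rintro x ⟨hxY, hxa⟩
    have hMx : M.Adj x (prt x) := hprt x
    constructor
    · by_contra hout
      have : s(x, prt x) ∈ cutSet G Y :=
        cut_mem_iff.2 ⟨M.adj_sub hMx, Or.inl ⟨hxY, hout⟩⟩
      have := he₀u s(x, prt x) ⟨Subgraph.mem_edgeSet.2 hMx, this⟩
      rw [Sym2.eq_iff] at this
      rcases this with ⟨rfl, rfl⟩ | ⟨rfl, rfl⟩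
      · exact hxa rfl
      · exact hout ha
    · intro hpa
      rw [Set.mem_singleton_iff] at hpa
      have hxb : x = b := by rw [← hprt_invol x, hpa, hprt_a]
      exact hb (hxb ▸ hxY)
  have hprt_col : ∀ x, col (prt x) ≠ col x := fun x =>
    (col.valid (M.adj_sub (hprt x))).symm
  have himage : ∀ i jj : Fin 2, i ≠ jj → prt '' (S ∩ col ⁻¹' {i}) = S ∩ col ⁻¹' {jj} := by
    intro i jj hij
    apply Set.eq_of_subset_of_subset
    · rintro y ⟨x, ⟨hxS, hxc⟩, rfl⟩
      refine ⟨hprt_mem x hxS, ?_⟩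
      have := hprt_col x
      simp only [Set.mem_preimage, Set.mem_singleton_iff] at *
      revert this hij hxc
      generalize col x = p; generalize col (prt x) = q
      revert p q; revert i jj; decide
    · rintro y ⟨hyS, hyc⟩
      refine ⟨prt y, ⟨hprt_mem y hyS, ?_⟩, hprt_invol y⟩
      have := hprt_col y
      simp only [Set.mem_preimage, Set.mem_singleton_iff] at *
      revert this hij hyc
      generalize col y = p; generalize col (prt y) = q
      revert p q; revert i jj; decide
  have hinj : Set.InjOn prt (S ∩ col ⁻¹' {col a}) := by
    intro x _ y _ hxy
    rw [← hprt_invol x, hxy, hprt_invol]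
  have hcards : (S ∩ col ⁻¹' {col a}).ncard = (S ∩ col ⁻¹' {j}).ncard := by
    rw [← himage (col a) j (Ne.symm hj), Set.ncard_image_of_injOn hinj]
  have h1 : Y ∩ col ⁻¹' {col a} = insert a (S ∩ col ⁻¹' {col a}) := by
    rw [hS]
    ext x
    simp only [Set.mem_inter_iff, Set.mem_diff, Set.mem_singleton_iff, Set.mem_insert_iff,
      Set.mem_preimage]
    constructor
    · rintro ⟨hxY, hxc⟩
      by_cases hxa : x = a
      · exact Or.inl hxa
      · exact Or.inr ⟨⟨hxY, hxa⟩, hxc⟩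
    · rintro (rfl | ⟨⟨h1, h2⟩, h3⟩)
      · exact ⟨ha, rfl⟩
      · exact ⟨h1, h3⟩
  have h2 : Y ∩ col ⁻¹' {j} = S ∩ col ⁻¹' {j} := by
    rw [hS]
    ext x
    simp only [Set.mem_inter_iff, Set.mem_diff, Set.mem_singleton_iff, Set.mem_preimage]
    constructor
    · rintro ⟨hxY, hxc⟩
      refine ⟨⟨hxY, ?_⟩, hxc⟩
      rintro rfl
      exact hj hxc.symm
    · rintro ⟨⟨h1, _⟩, h3⟩
      exact ⟨h1, h3⟩
  rw [h1, h2, Set.ncard_insert_of_notMem (by simp [hS]), hcards]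

lemma orientation [Finite V] (col : G.Coloring (Fin 2)) (ht : tightCut G Y)
    (hmc : ∀ e ∈ G.edgeSet, ∃ M : G.Subgraph, M.IsPerfectMatching ∧ e ∈ M.edgeSet)
    {a b a' b' : V} (h : s(a, b) ∈ cutSet G Y) (ha : a ∈ Y) (hb : b ∉ Y)
    (h' : s(a', b') ∈ cutSet G Y) (ha' : a' ∈ Y) (hb' : b' ∉ Y) :
    col a = col a' := by
  by_contra hne
  obtain ⟨M, hM, heM⟩ := hmc _ (cut_subset_edgeSet h)
  obtain ⟨M', hM', heM'⟩ := hmc _ (cut_subset_edgeSet h')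
  have c1 := count_lemma col ht hM heM ha hb (col a') (Ne.symm hne)
  have c2 := count_lemma col ht hM' heM' ha' hb' (col a) hne
  omega

lemma contract_cycle {u₁ u₂ x₁ x₂ : V} (hx₁ : x₁ ∈ Y) (hx₂ : x₂ ∈ Y)
    (ha₁ : G.Adj u₁ x₁) (ha₂ : G.Adj u₂ x₂) (P : G.Walk u₁ u₂)
    (hp : ∀ w ∈ P.support, w ∉ Y) (hnd : P.support.Nodup) (hne : u₁ ≠ u₂) :
    ∃ W : (contractSet G Y).Walk (Sum.inr ()) (Sum.inr ()),
      W.IsCycle ∧ W.length = P.length + 2 ∧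
      (∀ z, z ∈ W.support ↔ z = Sum.inr () ∨ ∃ w ∈ P.support, z = cpi Y w) := by
  have hu₁ : u₁ ∉ Y := hp _ P.start_mem_support
  have hu₂ : u₂ ∉ Y := hp _ P.end_mem_support
  set L := liftW P hu₁ hu₂ hp with hL
  have hLsup : L.support = P.support.map (cpi Y) := support_liftW P hu₁ hu₂ hp
  have hinr_not_mem : Sum.inr () ∉ L.support := by
    rw [hLsup]
    intro hmem
    obtain ⟨w, hw, hweq⟩ := List.mem_map.1 hmem
    exact cpi_ne_inr (hp w hw) hweq
  have hLsup_nodup : L.support.Nodup := by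
    rw [hLsup]
    exact List.Nodup.map_on (fun x hx y hy hxy => cpi_injOn (hp x hx) (hp y hy) hxy) hnd
  have hLtrail : L.edges.Nodup := by
    have : L.IsPath := (Walk.isPath_def L).2 hLsup_nodup
    exact this.isTrail.edges_nodup
  refine ⟨Walk.cons (contract_adj_inr hu₁ hx₁ ha₁).symm
    (L.concat (contract_adj_inr hu₂ hx₂ ha₂)), ?_, ?_, ?_⟩
  · rw [Walk.isCycle_def]
    refine ⟨?_, by simp, ?_⟩
    · rw [Walk.isTrail_def, Walk.edges_cons, Walk.edges_concat, List.concat_eq_append]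
      rw [List.nodup_cons, List.nodup_append]
      refine ⟨?_, hLtrail, by simp, ?_⟩
      · intro hmem
        rw [List.mem_append] at hmem
        rcases hmem with hmem | hmem
        · exact hinr_not_mem (Walk.fst_mem_support_of_mem_edges L hmem)
        · rw [List.mem_singleton, Sym2.eq_iff] at hmem
          rcases hmem with ⟨h1, h2⟩ | ⟨h1, h2⟩
          · simp at h1
          · rw [Sum.inl.injEq, Subtype.mk.injEq] at h2
            exact hne h2
      · intro e he
        simp only [List.mem_singleton, forall_eq]
        rintro rfl
        exact hinr_not_mem (Walk.snd_mem_support_of_mem_edges L he)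
    · rw [Walk.support_cons, Walk.support_concat, List.tail_cons,
        List.nodup_append]
      exact ⟨hLsup_nodup, by simp, fun z hz => by
        simp only [List.mem_singleton, forall_eq]; rintro rfl; exact hinr_not_mem hz⟩
  · rw [Walk.length_cons, Walk.length_concat, length_liftW]
  · intro z
    rw [Walk.support_cons, Walk.support_concat, List.mem_cons,
      List.mem_append, List.mem_singleton, hLsup, List.mem_map]
    constructor
    · rintro (rfl | ⟨w, hw, rfl⟩ | rfl)
      · exact Or.inl rfl
      · exact Or.inr ⟨w, hw, rfl⟩
      · exact Or.inl rfl
    · rintro (rfl | ⟨w, hw, rfl⟩)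
      · exact Or.inl rfl
      · exact Or.inr (Or.inl ⟨w, hw, rfl⟩)

/-- Any symmetric relation that matches every vertex uniquely gives a PM. -/
lemma hasPM_of_rel {V' : Type*} (H : SimpleGraph V') (R : V' → V' → Prop)
    (hsymm : ∀ u w, R u w → R w u) (hadj : ∀ u w, R u w → H.Adj u w)
    (hex : ∀ v, ∃! w, R v w) : hasPM H := by
  refine ⟨⟨Set.univ, R, fun h => hadj _ _ h, fun _ => Set.mem_univ _,
    ⟨fun u w h => hsymm u w h⟩⟩, ?_⟩
  rw [Subgraph.isPerfectMatching_iff]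
  exact hex

section MRel
variable {T : Set ({v : V // v ∉ Y} ⊕ Unit)}

/-- The matching relation on `V` induced by a subgraph of a vertex-deleted
contraction. -/
def MRel (M : (delVerts (contractSet G Y) T).Subgraph) (u w : V) : Prop :=
  ∃ (hu : u ∉ Y) (hw : w ∉ Y) (hu' : (Sum.inl ⟨u, hu⟩ : {v : V // v ∉ Y} ⊕ Unit) ∈ Tᶜ)
    (hw' : (Sum.inl ⟨w, hw⟩ : {v : V // v ∉ Y} ⊕ Unit) ∈ Tᶜ),
    M.Adj ⟨Sum.inl ⟨u, hu⟩, hu'⟩ ⟨Sum.inl ⟨w, hw⟩, hw'⟩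

variable {M : (delVerts (contractSet G Y) T).Subgraph}

lemma MRel.adj {u w : V} (h : MRel M u w) : G.Adj u w := by
  obtain ⟨hu, hw, hu', hw', hM⟩ := h
  exact adj_of_contract_inl (M.adj_sub hM)

lemma MRel.symm {u w : V} (h : MRel M u w) : MRel M w u := by
  obtain ⟨hu, hw, hu', hw', hM⟩ := h
  exact ⟨hw, hu, hw', hu', hM.symm⟩

lemma MRel.not_mem_Y {u w : V} (h : MRel M u w) : u ∉ Y ∧ w ∉ Y :=
  ⟨h.choose, h.choose_spec.choose⟩

lemma MRel.not_mem_T {u w : V} (h : MRel M u w) :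
    (Sum.inl ⟨w, h.not_mem_Y.2⟩ : {v : V // v ∉ Y} ⊕ Unit) ∉ T := by
  obtain ⟨hu, hw, hu', hw', hM⟩ := h
  exact hw'

lemma MRel.unique (hM : M.IsMatching) {u w w' : V} (h : MRel M u w)
    (h' : MRel M u w') : w = w' := by
  obtain ⟨hu, hw, hu', hw', hMa⟩ := h
  obtain ⟨hu2, hw2, hu2', hw2', hMa'⟩ := h'
  obtain ⟨z, hz, hzu⟩ := hM (M.edge_vert hMa)
  have e1 := hzu _ hMa
  have e2 := hzu _ hMa'
  rw [← e2] at e1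
  have := congrArg Subtype.val e1
  simp only [Sum.inl.injEq, Subtype.mk.injEq] at this
  exact this

lemma MRel_intro {u w : V} (hu : u ∉ Y) (hw : w ∉ Y)
    (hu' : (Sum.inl ⟨u, hu⟩ : {v : V // v ∉ Y} ⊕ Unit) ∈ Tᶜ)
    (hw' : (Sum.inl ⟨w, hw⟩ : {v : V // v ∉ Y} ⊕ Unit) ∈ Tᶜ)
    (hM : M.Adj ⟨Sum.inl ⟨u, hu⟩, hu'⟩ ⟨Sum.inl ⟨w, hw⟩, hw'⟩) : MRel M u w :=
  ⟨hu, hw, hu', hw', hM⟩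

lemma MRel_elim {u w : V} (h : MRel M u w) :
    ∃ (hu : u ∉ Y) (hw : w ∉ Y)
      (hu' : (Sum.inl ⟨u, hu⟩ : {v : V // v ∉ Y} ⊕ Unit) ∈ Tᶜ)
      (hw' : (Sum.inl ⟨w, hw⟩ : {v : V // v ∉ Y} ⊕ Unit) ∈ Tᶜ),
    M.Adj ⟨Sum.inl ⟨u, hu⟩, hu'⟩ ⟨Sum.inl ⟨w, hw⟩, hw'⟩ := h

lemma MRel_exists (hM : M.IsPerfectMatching) (hinr : Sum.inr () ∈ T) {u : V}
    (hu : u ∉ Y) (hu' : (Sum.inl ⟨u, hu⟩ : {v : V // v ∉ Y} ⊕ Unit) ∈ Tᶜ) :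
    ∃ w, MRel M u w := by
  obtain ⟨z, hz, -⟩ := Subgraph.isPerfectMatching_iff.1 hM ⟨Sum.inl ⟨u, hu⟩, hu'⟩
  obtain ⟨z1, hz1⟩ := z
  match z1, hz1, hz with
  | Sum.inr (), hz1, hz => exact absurd hinr hz1
  | Sum.inl w, hz1, hz => exact ⟨w.1, hu, w.2, hu', hz1, hz⟩

end MRel

/-- A closed walk visits its basepoint in the tail of its support. -/
lemma end_mem_support_tail {v : V} (p : G.Walk v v) (hp : p ≠ Walk.nil) :
    v ∈ p.support.tail := by
  cases p with
  | nil => exact absurd rfl hp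
  | cons h q => simpa using q.end_mem_support

lemma mem_support_rotate_iff [DecidableEq V] {v u x : V} (C : G.Walk v v)
    (hne : C ≠ Walk.nil) (hu : u ∈ C.support) :
    x ∈ (C.rotate u hu).support ↔ x ∈ C.support := by
  have h1 := C.support_rotate u hu
  have hrne : C.rotate u hu ≠ Walk.nil := by
    intro h
    have : (C.rotate u hu).length = 0 := by rw [h]; rfl
    have h2 := congrArg Walk.length (C.take_spec hu)
    rw [Walk.length_append] at h2
    have hC0 : C.length = 0 := by
      rw [Walk.rotate] at this
      rw [Walk.length_append] at this
      omega
    cases C with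
    | nil => exact hne rfl
    | cons h q => simp [Walk.length_cons] at hC0
  constructor
  · intro h
    rw [Walk.mem_support_iff] at h
    rcases h with rfl | h
    · exact hu
    · exact List.mem_of_mem_tail (h1.mem_iff.1 h)
  · intro h
    rw [Walk.mem_support_iff] at h
    rcases h with rfl | h
    · exact List.mem_of_mem_tail (h1.mem_iff.2 (end_mem_support_tail C hne))
    · exact List.mem_of_mem_tail (h1.mem_iff.2 h)

/-- The one-sided case: a cycle avoiding `Y` entirely. -/
lemma oneSided (htY : tightCut G Y)
    (hmc : ∀ e ∈ G.edgeSet, ∃ M : G.Subgraph, M.IsPerfectMatching ∧ e ∈ M.edgeSet)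
    (hcf : cycleConformal (contractSet G Y))
    {v : V} (C : G.Walk v v) (hC : C.IsCycle) (heven : Even C.length)
    (hsup : ∀ w ∈ C.support, w ∉ Y) :
    hasPM (delVerts G {x | x ∈ C.support}) := by
  classical
  have hv : v ∉ Y := hsup v C.start_mem_support
  set W := liftW C hv hv hsup with hW
  have hWsup : W.support = C.support.map (cpi Y) := support_liftW C hv hv hsup
  have hWlen : W.length = C.length := length_liftW C hv hv hsup
  -- W is a cycle
  have hWcyc : W.IsCycle := by
    rw [Walk.isCycle_def]
    refine ⟨?_, ?_, ?_⟩
    · rw [Walk.isTrail_def, edges_liftW]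
      refine List.Nodup.map_on ?_ hC.isTrail.edges_nodup
      intro e he e' he' heq
      induction e using Sym2.ind with
      | _ x y =>
        induction e' using Sym2.ind with
        | _ x' y' =>
          have hx := hsup x (C.fst_mem_support_of_mem_edges he)
          have hy := hsup y (C.snd_mem_support_of_mem_edges he)
          have hx' := hsup x' (C.fst_mem_support_of_mem_edges he')
          have hy' := hsup y' (C.snd_mem_support_of_mem_edges he')
          rw [Sym2.map_pair_eq, Sym2.map_pair_eq, Sym2.eq_iff] at heq
          rw [Sym2.eq_iff]
          rcases heq with ⟨h1, h2⟩ | ⟨h1, h2⟩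
          · exact Or.inl ⟨cpi_injOn hx hx' h1, cpi_injOn hy hy' h2⟩
          · exact Or.inr ⟨cpi_injOn hx hy' h1, cpi_injOn hy hx' h2⟩
    · intro hnil
      have : W.length = 0 := by rw [hnil]; rfl
      have := hC.three_le_length
      omega
    · rw [hWsup, ← List.map_tail]
      refine List.Nodup.map_on ?_ hC.2
      intro x hx y hy hxy
      exact cpi_injOn (hsup x (List.mem_of_mem_tail hx)) (hsup y (List.mem_of_mem_tail hy)) hxy
  -- apply cycle-conformality of the contraction
  obtain ⟨M₁, hM₁⟩ := hcf.2 _ W hWcyc (hWlen ▸ heven)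
  have hT_iff : ∀ (w : V) (hw : w ∉ Y),
      ((Sum.inl ⟨w, hw⟩ : {v : V // v ∉ Y} ⊕ Unit) ∈ {x | x ∈ W.support}) ↔ w ∈ C.support := by
    intro w hw
    simp only [Set.mem_setOf_eq, hWsup, List.mem_map]
    constructor
    · rintro ⟨w', hw', hweq⟩
      have hw'Y := hsup w' hw'
      rw [cpi_of_not_mem hw'Y] at hweq
      obtain rfl : w' = w := by simpa [Subtype.ext_iff] using hweq
      exact hw'
    · intro hmem
      exact ⟨w, hmem, cpi_of_not_mem hw⟩
  have hcT : (Sum.inr () : {v : V // v ∉ Y} ⊕ Unit) ∉ {x | x ∈ W.support} := by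
    simp only [Set.mem_setOf_eq, hWsup, List.mem_map]
    rintro ⟨w', hw', hweq⟩
    exact cpi_ne_inr (hsup w' hw') hweq
  -- the partner of the contracted vertex
  obtain ⟨z, hz, hzu⟩ := Subgraph.isPerfectMatching_iff.1 hM₁ ⟨Sum.inr (), hcT⟩
  obtain ⟨z1, hz1⟩ := z
  have hz1' : ∃ u₀' : {v : V // v ∉ Y}, z1 = Sum.inl u₀' := by
    match z1 with
    | Sum.inl w => exact ⟨w, rfl⟩
    | Sum.inr () =>
      exfalso
      exact (delVerts (contractSet G Y) {x | x ∈ W.support}).loopless.irrefl _ (M₁.adj_sub hz)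
  obtain ⟨u₀', rfl⟩ := hz1'
  have hu₀Y : u₀'.1 ∉ Y := u₀'.2
  have hu₀C : u₀'.1 ∉ C.support := by
    intro h
    exact hz1 ((hT_iff u₀'.1 u₀'.2).2 h)
  have hadj₀ : (contractSet G Y).Adj (Sum.inl u₀') (Sum.inr ()) := (M₁.adj_sub hz).symm
  obtain ⟨x₀, hx₀Y, hx₀adj⟩ := exists_cutpartner_of_contract_inr hadj₀
  have he₀cut : s(x₀, u₀'.1) ∈ cutSet G Y :=
    cut_mem_iff.2 ⟨hx₀adj.symm, Or.inl ⟨hx₀Y, u₀'.2⟩⟩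
  obtain ⟨M₀, hM₀, he₀M⟩ := hmc s(x₀, u₀'.1) hx₀adj.symm
  obtain ⟨e', -, he'u⟩ := htY M₀ hM₀
  have he'e : e' = s(x₀, u₀'.1) := (he'u _ ⟨he₀M, he₀cut⟩).symm
  subst he'e
  obtain ⟨prt, hprt⟩ := Classical.axiomOfChoice
    (fun v => (Subgraph.isPerfectMatching_iff.1 hM₀ v).exists)
  have huniq₀ : ∀ a b, M₀.Adj a b → b = prt a := by
    intro a b hab
    obtain ⟨w', hw', hwu⟩ := Subgraph.isPerfectMatching_iff.1 hM₀ a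
    rw [hwu b hab, hwu _ (hprt a)]
  have hprt_invol : ∀ a, prt (prt a) = a := fun a => (huniq₀ _ _ (hprt a).symm).symm
  have hprt_x₀ : prt x₀ = u₀'.1 := (huniq₀ x₀ u₀'.1 (Subgraph.mem_edgeSet.1 he₀M)).symm
  have hYstay : ∀ x, x ∈ Y → x ≠ x₀ → prt x ∈ Y ∧ prt x ≠ x₀ := by
    intro x hxY hxx₀
    constructor
    · by_contra hout
      have hcut : s(x, prt x) ∈ cutSet G Y :=
        cut_mem_iff.2 ⟨M₀.adj_sub (hprt x), Or.inl ⟨hxY, hout⟩⟩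
      have := he'u s(x, prt x) ⟨Subgraph.mem_edgeSet.2 (hprt x), hcut⟩
      rw [Sym2.eq_iff] at this
      rcases this with ⟨rfl, -⟩ | ⟨rfl, -⟩
      · exact hxx₀ rfl
      · exact u₀'.2 hxY
    · intro hpx
      have : x = u₀'.1 := by rw [← hprt_invol x, hpx, hprt_x₀]
      exact u₀'.2 (this ▸ hxY)
  set S : Set V := {x | x ∈ C.support} with hSdef
  have hYS : ∀ x, x ∈ Y → x ∉ S := fun x hxY hxS => hsup x hxS hxY
  have hu₀S : u₀'.1 ∉ S := hu₀C
  have hx₀S : x₀ ∉ S := hYS x₀ hx₀Y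
  have hne₀ : x₀ ≠ u₀'.1 := (hx₀adj.symm).ne
  -- the matching relation on the remaining graph
  set R : ↥Sᶜ → ↥Sᶜ → Prop := fun p q =>
    MRel M₁ p.1 q.1 ∨ (p.1 = u₀'.1 ∧ q.1 = x₀) ∨ (p.1 = x₀ ∧ q.1 = u₀'.1) ∨
    (p.1 ∈ Y ∧ q.1 ∈ Y ∧ p.1 ≠ x₀ ∧ q.1 ≠ x₀ ∧ M₀.Adj p.1 q.1) with hR
  have hno_u₀ : ∀ w, ¬ MRel M₁ u₀'.1 w := by
    intro w hw
    obtain ⟨hu, hww, hu', hw', hMa⟩ := MRel_elim hw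
    have hveq : (⟨Sum.inl ⟨u₀'.1, hu⟩, hu'⟩ : ↥({x | x ∈ W.support}ᶜ)) = ⟨Sum.inl u₀', hz1⟩ := rfl
    rw [hveq] at hMa
    obtain ⟨r, -, hru⟩ := Subgraph.isPerfectMatching_iff.1 hM₁ ⟨Sum.inl u₀', hz1⟩
    have := (hru _ hMa).trans (hru _ hz.symm).symm
    exact absurd (congrArg Subtype.val this) (by simp)
  apply hasPM_of_rel (delVerts G S) R
  · rintro p q (h | ⟨h1, h2⟩ | ⟨h1, h2⟩ | ⟨h1, h2, h3, h4, h5⟩)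
    · exact Or.inl h.symm
    · exact Or.inr (Or.inr (Or.inl ⟨h2, h1⟩))
    · exact Or.inr (Or.inl ⟨h2, h1⟩)
    · exact Or.inr (Or.inr (Or.inr ⟨h2, h1, h4, h3, h5.symm⟩))
  · rintro p q (h | ⟨h1, h2⟩ | ⟨h1, h2⟩ | ⟨h1, h2, h3, h4, h5⟩)
    · exact h.adj
    · show G.Adj p.1 q.1; rw [h1, h2]; exact hx₀adj.symm.symm
    · show G.Adj p.1 q.1; rw [h1, h2]; exact hx₀adj.symm
    · exact M₀.adj_sub h5
  · intro p
    by_cases hpY : p.1 ∈ Y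
    · by_cases hpx : p.1 = x₀
      · refine ⟨⟨u₀'.1, hu₀S⟩, Or.inr (Or.inr (Or.inl ⟨hpx, rfl⟩)), ?_⟩
        rintro q (h | ⟨h1, h2⟩ | ⟨h1, h2⟩ | ⟨h1, h2, h3, h4, h5⟩)
        · exact absurd hpY h.not_mem_Y.1
        · exact absurd (h1 ▸ hpx).symm hne₀
        · exact Subtype.ext h2
        · exact absurd hpx h3
      · obtain ⟨hq1, hq2⟩ := hYstay p.1 hpY hpx
        refine ⟨⟨prt p.1, hYS _ hq1⟩, Or.inr (Or.inr (Or.inr ⟨hpY, hq1, hpx, hq2, hprt p.1⟩)), ?_⟩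
        rintro q (h | ⟨h1, h2⟩ | ⟨h1, h2⟩ | ⟨h1, h2, h3, h4, h5⟩)
        · exact absurd hpY h.not_mem_Y.1
        · exact absurd (h1 ▸ hpY) u₀'.2
        · exact absurd h1 hpx
        · exact Subtype.ext (huniq₀ _ _ h5)
    · by_cases hpu : p.1 = u₀'.1
      · refine ⟨⟨x₀, hx₀S⟩, Or.inr (Or.inl ⟨hpu, rfl⟩), ?_⟩
        rintro q (h | ⟨h1, h2⟩ | ⟨h1, h2⟩ | ⟨h1, h2, h3, h4, h5⟩)
        · exact absurd (hpu ▸ h) (hno_u₀ q.1)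
        · exact Subtype.ext h2
        · exact absurd (hpu.symm.trans h1) hne₀.symm
        · exact absurd h1 hpY
      · have hpT : (Sum.inl ⟨p.1, hpY⟩ : {v : V // v ∉ Y} ⊕ Unit) ∉ {x | x ∈ W.support} :=
          fun h => p.2 ((hT_iff _ _).1 h)
        obtain ⟨z', hz', hz'u⟩ :=
          Subgraph.isPerfectMatching_iff.1 hM₁ ⟨Sum.inl ⟨p.1, hpY⟩, hpT⟩
        obtain ⟨z'1, hz'1⟩ := z'
        match z'1, hz'1, hz', hz'u with
        | Sum.inr (), hz'1, hz', hz'u =>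
          exfalso
          have : (⟨Sum.inl ⟨p.1, hpY⟩, hpT⟩ : ↥({x | x ∈ W.support}ᶜ)) = ⟨Sum.inl u₀', hz1⟩ := by
            have h1 : (⟨Sum.inr (), hz'1⟩ : ↥({x | x ∈ W.support}ᶜ)) = ⟨Sum.inr (), hcT⟩ := rfl
            exact hzu _ (h1 ▸ hz'.symm)
          have := congrArg Subtype.val this
          simp only [Sum.inl.injEq, Subtype.mk.injEq] at this
          exact hpu (congrArg Subtype.val this)
        | Sum.inl w', hz'1, hz', hz'u =>
          have hwS : w'.1 ∉ S := fun h => hz'1 ((hT_iff w'.1 w'.2).2 h)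
          refine ⟨⟨w'.1, hwS⟩, Or.inl (MRel_intro hpY w'.2 hpT hz'1 hz'), ?_⟩
          rintro q (h | ⟨h1, h2⟩ | ⟨h1, h2⟩ | ⟨h1, h2, h3, h4, h5⟩)
          · exact Subtype.ext (h.unique hM₁.1 (MRel_intro hpY w'.2 hpT hz'1 hz'))
          · exact absurd h1 hpu
          · exact absurd (h1.symm ▸ hx₀Y) hpY
          · exact absurd h1 hpY

end TCCaux

open TCCaux

/-- Let `G` be a cubic, matching covered, bipartite graph with a tight cut
`∂(X)` that is an induced matching of exactly 3 edges. If both tight cut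
contractions are cycle-conformal, then so is `G`. -/
theorem cubic_tightCut_cycleConformal {V : Type*} (G : SimpleGraph V)
    (X : Set V)
    (hcubic : ∀ v : V, (G.neighborSet v).ncard = 3)
    (hmc : matchingCovered G) (hbip : G.Colorable 2) (ht : tightCut G X)
    (hcard : (cutSet G X).ncard = 3)
    (hind : ∀ a b c d : V, s(a, b) ∈ cutSet G X → s(c, d) ∈ cutSet G X →
      s(a, b) ≠ s(c, d) → a ≠ c ∧ ¬ G.Adj a c)
    (h1 : cycleConformal (contractSet G X))
    (h2 : cycleConformal (contractSet G Xᶜ)) :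
    cycleConformal G := by
  classical
  obtain ⟨hcard4, hconn, hPM, hmc'⟩ := hmc
  have hfin : Finite V := by
    by_contra h
    rw [not_finite_iff_infinite] at h
    rw [Nat.card_eq_zero_of_infinite] at hcard4
    omega
  obtain ⟨col⟩ := hbip
  refine ⟨hPM, ?_⟩
  intro v C hC heven
  have hcnt_even : Even (C.edges.filter (· ∈ cutSet G X)).length :=
    (parity_cut_count C).2 Iff.rfl
  have hcnt_le : (C.edges.filter (· ∈ cutSet G X)).length ≤ 3 := by
    have hnd : (C.edges.filter (· ∈ cutSet G X)).Nodup :=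
      hC.isTrail.edges_nodup.filter _
    have hsub : ↑(C.edges.filter (· ∈ cutSet G X)).toFinset ⊆ cutSet G X := by
      intro e he
      simp only [List.coe_toFinset, Set.mem_setOf_eq, List.mem_filter,
        decide_eq_true_eq] at he
      exact he.2
    calc (C.edges.filter (· ∈ cutSet G X)).length
        = (C.edges.filter (· ∈ cutSet G X)).toFinset.card :=
          (List.toFinset_card_of_nodup hnd).symm
      _ = (↑(C.edges.filter (· ∈ cutSet G X)).toFinset : Set (Sym2 V)).ncard :=
          (Set.ncard_coe_finset _).symm
      _ ≤ (cutSet G X).ncard := Set.ncard_le_ncard hsub (Set.toFinite _)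
      _ = 3 := hcard
  have hcnt02 : (C.edges.filter (· ∈ cutSet G X)).length = 0 ∨
      (C.edges.filter (· ∈ cutSet G X)).length = 2 := by
    obtain ⟨k, hk⟩ := hcnt_even
    omega
  rcases hcnt02 with h0 | h02
  · -- the cycle avoids the cut entirely
    rw [List.length_eq_zero_iff] at h0
    have hnocut : ∀ e ∈ C.edges, e ∉ cutSet G X := by
      intro e he hecut
      have : e ∈ C.edges.filter (· ∈ cutSet G X) :=
        List.mem_filter.2 ⟨he, by simpa using hecut⟩
      rw [h0] at this
      simp at this
    by_cases hvX : v ∈ X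
    · refine oneSided (tightCut_compl ht) hmc' h2 C hC heven ?_
      exact stay_out C (by simpa using hvX)
        (fun e he => by rw [cutSet_compl]; exact hnocut e he)
    · exact oneSided ht hmc' h1 C hC heven (stay_out C hvX hnocut)
  · -- the cycle crosses the cut exactly twice
    obtain ⟨e1, e2, hfil⟩ := List.length_eq_two.1 h02
    have he1mem : e1 ∈ C.edges ∧ e1 ∈ cutSet G X := by
      have h : e1 ∈ C.edges.filter (· ∈ cutSet G X) := by rw [hfil]; simp
      rw [List.mem_filter, decide_eq_true_eq] at h
      exact h
    obtain ⟨a0, b0, he1eq, hadj0, ha0X, hb0X⟩ := he1mem.2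
    have he1C : s(a0, b0) ∈ C.edges := he1eq ▸ he1mem.1
    have hb0C : b0 ∈ C.support := C.snd_mem_support_of_mem_edges he1C
    have hCne : C ≠ SimpleGraph.Walk.nil := (SimpleGraph.Walk.isCycle_def C).1 hC |>.2.1
    set C' := C.rotate b0 hb0C with hC'def
    have hC'cyc : C'.IsCycle := hC.rotate hb0C
    have hsupC' : ∀ x, x ∈ C'.support ↔ x ∈ C.support :=
      fun x => mem_support_rotate_iff C hCne hb0C
    have hlenC' : C'.length = C.length := by
      have h2 := congrArg SimpleGraph.Walk.length (C.take_spec hb0C)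
      rw [SimpleGraph.Walk.length_append] at h2
      rw [hC'def, SimpleGraph.Walk.rotate, SimpleGraph.Walk.length_append]
      omega
    have hcnt' : (C'.edges.filter (· ∈ cutSet G X)).length = 2 := by
      rw [((C.rotate_edges b0 hb0C).perm.filter _).length_eq]
      exact h02
    have ha0C' : a0 ∈ C'.support :=
      (hsupC' a0).2 (C.fst_mem_support_of_mem_edges he1C)
    obtain ⟨b₁, a₁, hb₁X, ha₁X, cross₁, q₁, t₂, htdec, hq₁sup⟩ :=
      first_cross (C'.takeUntil a0 ha0C') hb0X ha0X
    have hdec : C' = q₁.append (SimpleGraph.Walk.cons cross₁ (t₂.append (C'.dropUntil a0 ha0C'))) := by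
      conv_lhs => rw [← C'.take_spec ha0C']
      rw [htdec, ← SimpleGraph.Walk.append_assoc, SimpleGraph.Walk.cons_append]
    obtain ⟨a₂, b₂, ha₂X', hb₂Xc, cross₂, s₁, s₂, hrdec, hs₁sup⟩ :=
      first_cross (Y := Xᶜ) (t₂.append (C'.dropUntil a0 ha0C'))
        (by simpa using ha₁X) (by simpa using hb0X)
    have ha₂X : a₂ ∈ X := by simpa using ha₂X'
    have hb₂X : b₂ ∉ X := by simpa using hb₂Xc
    have hs₁X : ∀ w ∈ s₁.support, w ∈ X := fun w hw => by simpa using hs₁sup w hw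
    have hfull : C' = q₁.append (SimpleGraph.Walk.cons cross₁
        (s₁.append (SimpleGraph.Walk.cons cross₂ s₂))) := by
      rw [hdec, hrdec]
    -- edge bookkeeping
    have hedges : C'.edges = q₁.edges ++ (s(b₁, a₁) ::
        (s₁.edges ++ (s(a₂, b₂) :: s₂.edges))) := by
      rw [hfull]
      rw [SimpleGraph.Walk.edges_append, SimpleGraph.Walk.edges_cons,
        SimpleGraph.Walk.edges_append, SimpleGraph.Walk.edges_cons]
    have hcr₁cut : s(b₁, a₁) ∈ cutSet G X :=
      cut_mem_iff.2 ⟨cross₁, Or.inr ⟨ha₁X, hb₁X⟩⟩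
    have hcr₂cut : s(a₂, b₂) ∈ cutSet G X :=
      cut_mem_iff.2 ⟨cross₂, Or.inl ⟨ha₂X, hb₂X⟩⟩
    have hq₁fil : q₁.edges.filter (· ∈ cutSet G X) = [] :=
      List.filter_eq_nil_iff.2 (fun e he => by
        simpa using edges_not_cut_out q₁ hq₁sup e he)
    have hs₁fil : s₁.edges.filter (· ∈ cutSet G X) = [] :=
      List.filter_eq_nil_iff.2 (fun e he => by
        simpa using edges_not_cut_in s₁ hs₁X e he)
    have hs₂fil : (s₂.edges.filter (· ∈ cutSet G X)).length = 0 := by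
      rw [hedges, List.filter_append, List.filter_cons_of_pos (by simpa using hcr₁cut),
        List.filter_append, List.filter_cons_of_pos (by simpa using hcr₂cut),
        hq₁fil, hs₁fil] at hcnt'
      simp only [List.length_append, List.length_cons, List.length_nil, List.nil_append] at hcnt'
      omega
    have hs₂nocut : ∀ e ∈ s₂.edges, e ∉ cutSet G X := by
      rw [List.length_eq_zero_iff] at hs₂fil
      intro e he hecut
      have : e ∈ s₂.edges.filter (· ∈ cutSet G X) :=
        List.mem_filter.2 ⟨he, by simpa using hecut⟩
      rw [hs₂fil] at this
      simp at this
    have hs₂X : ∀ w ∈ s₂.support, w ∉ X := stay_out s₂ hb₂X hs₂nocut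
    -- support bookkeeping
    have hsupfull : C'.support = q₁.support ++ (s₁.support ++ s₂.support) := by
      rw [hfull, SimpleGraph.Walk.support_append, SimpleGraph.Walk.support_cons,
        List.tail_cons, SimpleGraph.Walk.support_append, SimpleGraph.Walk.support_cons,
        List.tail_cons]
    have htail : C'.support.tail = q₁.support.tail ++ (s₁.support ++ s₂.support) := by
      rw [hsupfull, q₁.support_eq_cons, List.cons_append, List.tail_cons, List.tail_cons]
    have hnd := hC'cyc.2
    rw [htail, List.nodup_append] at hnd
    obtain ⟨ndq₁t, hnd2, hdisj1⟩ := hnd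
    rw [List.nodup_append] at hnd2
    obtain ⟨nds₁, nds₂, hdisj2⟩ := hnd2
    -- the outside path P
    have hPsup_list : (s₂.append q₁).support = s₂.support ++ q₁.support.tail :=
      SimpleGraph.Walk.support_append _ _
    have hPnd : (s₂.append q₁).support.Nodup := by
      rw [hPsup_list, List.nodup_append]
      exact ⟨nds₂, ndq₁t, fun x hx y hy hxy => hdisj1 y hy x (List.mem_append_right _ hx) hxy.symm⟩
    have hPnoX : ∀ w ∈ (s₂.append q₁).support, w ∉ X := by
      intro w hw
      rw [hPsup_list, List.mem_append] at hw
      rcases hw with hw | hw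
      · exact hs₂X w hw
      · exact hq₁sup w (List.mem_of_mem_tail hw)
    -- distinctness of the two crossing edges
    have hndE := hC'cyc.isTrail.edges_nodup
    rw [hedges, List.nodup_append, List.nodup_cons] at hndE
    have hne12 : s(b₁, a₁) ≠ s(a₂, b₂) := by
      intro h
      exact hndE.2.1.1 (h ▸ List.mem_append_right _ List.mem_cons_self)
    have hswap2 : s(b₂, a₂) = s(a₂, b₂) := Sym2.eq_swap
    have hswap1 : s(a₁, b₁) = s(b₁, a₁) := Sym2.eq_swap
    have hbb : b₁ ≠ b₂ :=
      (hind b₁ a₁ b₂ a₂ hcr₁cut (hswap2.symm ▸ hcr₂cut)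
        (fun h => hne12 (h.trans hswap2))).1
    have haa : a₁ ≠ a₂ :=
      (hind a₁ b₁ a₂ b₂ (hswap1.symm ▸ hcr₁cut) hcr₂cut
        (fun h => hne12 (hswap1 ▸ h))).1
    -- cycles in the two contractions
    obtain ⟨W₁, hW₁cyc, hW₁len, hW₁sup⟩ :=
      contract_cycle (Y := X) ha₂X ha₁X cross₂.symm cross₁ (s₂.append q₁)
        hPnoX hPnd hbb.symm
    obtain ⟨W₂, hW₂cyc, hW₂len, hW₂sup⟩ :=
      contract_cycle (Y := Xᶜ) (by simpa using hb₁X) hb₂Xc cross₁.symm cross₂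
        s₁ hs₁sup nds₁ haa
    -- evenness
    have hlen_decomp : C'.length = q₁.length + 1 + (s₁.length + 1 + s₂.length) := by
      rw [hfull, SimpleGraph.Walk.length_append, SimpleGraph.Walk.length_cons,
        SimpleGraph.Walk.length_append, SimpleGraph.Walk.length_cons]
      omega
    have hcol : col a₁ = col a₂ :=
      orientation col ht hmc' (hswap1.symm ▸ hcr₁cut) ha₁X hb₁X hcr₂cut ha₂X hb₂X
    have hs₁even : Even s₁.length := (even_length_iff_color_eq col s₁).2 hcol
    have hPlen : (s₂.append q₁).length = s₂.length + q₁.length :=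
      SimpleGraph.Walk.length_append _ _
    have hW₁even : Even W₁.length := by
      rw [hW₁len, hPlen]
      rw [Nat.even_iff] at heven hs₁even ⊢
      have : C'.length % 2 = 0 := by rw [hlenC']; exact heven
      omega
    have hW₂even : Even W₂.length := by
      rw [hW₂len]
      rw [Nat.even_iff] at hs₁even ⊢
      omega
    -- perfect matchings of the cycle-deleted contractions
    obtain ⟨M₁, hM₁⟩ := h1.2 _ W₁ hW₁cyc hW₁even
    obtain ⟨M₂, hM₂⟩ := h2.2 _ W₂ hW₂cyc hW₂even
    -- membership translations
    have hT₁ : ∀ (w : V) (hw : w ∉ X),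
        ((Sum.inl ⟨w, hw⟩ : {v : V // v ∉ X} ⊕ Unit) ∈ {x | x ∈ W₁.support}) ↔
          w ∈ (s₂.append q₁).support := by
      intro w hw
      simp only [Set.mem_setOf_eq]
      rw [hW₁sup]
      constructor
      · rintro (h | ⟨w', hw', heq⟩)
        · simp at h
        · rw [cpi_of_not_mem (hPnoX w' hw')] at heq
          obtain rfl : w = w' := by simpa [Subtype.ext_iff] using heq
          exact hw'
      · intro h
        exact Or.inr ⟨w, h, (cpi_of_not_mem hw).symm⟩
    have hT₂ : ∀ (w : V) (hw : w ∉ Xᶜ),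
        ((Sum.inl ⟨w, hw⟩ : {v : V // v ∉ Xᶜ} ⊕ Unit) ∈ {x | x ∈ W₂.support}) ↔
          w ∈ s₁.support := by
      intro w hw
      simp only [Set.mem_setOf_eq]
      rw [hW₂sup]
      constructor
      · rintro (h | ⟨w', hw', heq⟩)
        · simp at h
        · rw [cpi_of_not_mem (hs₁sup w' hw')] at heq
          obtain rfl : w = w' := by simpa [Subtype.ext_iff] using heq
          exact hw'
      · intro h
        exact Or.inr ⟨w, h, (cpi_of_not_mem hw).symm⟩
    have hinr₁ : (Sum.inr () : {v : V // v ∉ X} ⊕ Unit) ∈ {x | x ∈ W₁.support} :=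
      (hW₁sup _).2 (Or.inl rfl)
    have hinr₂ : (Sum.inr () : {v : V // v ∉ Xᶜ} ⊕ Unit) ∈ {x | x ∈ W₂.support} :=
      (hW₂sup _).2 (Or.inl rfl)
    have hPC : ∀ w ∈ (s₂.append q₁).support, w ∈ C.support := by
      intro w hw
      rw [hPsup_list, List.mem_append] at hw
      rw [← hsupC' w, hsupfull, List.mem_append, List.mem_append]
      rcases hw with hw | hw
      · exact Or.inr (Or.inr hw)
      · exact Or.inl (List.mem_of_mem_tail hw)
    have hs₁C : ∀ w ∈ s₁.support, w ∈ C.support := by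
      intro w hw
      rw [← hsupC' w, hsupfull, List.mem_append, List.mem_append]
      exact Or.inr (Or.inl hw)
    have hCpartP : ∀ w, w ∈ C.support → w ∉ X → w ∈ (s₂.append q₁).support := by
      intro w hwC hwX
      have hw' : w ∈ C'.support := (hsupC' w).2 hwC
      rw [hsupfull, List.mem_append, List.mem_append] at hw'
      rw [hPsup_list, List.mem_append]
      rcases hw' with hw | hw | hw
      · rw [q₁.support_eq_cons, List.mem_cons] at hw
        rcases hw with rfl | hw
        · exact Or.inl s₂.end_mem_support
        · exact Or.inr hw
      · exact absurd (hs₁X w hw) hwX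
      · exact Or.inl hw
    have hCpartS : ∀ w, w ∈ C.support → w ∈ X → w ∈ s₁.support := by
      intro w hwC hwX
      have hw' : w ∈ C'.support := (hsupC' w).2 hwC
      rw [hsupfull, List.mem_append, List.mem_append] at hw'
      rcases hw' with hw | hw | hw
      · exact absurd hwX (hq₁sup w hw)
      · exact hw
      · exact absurd hwX (hs₂X w hw)
    -- assemble the perfect matching of the cycle-deleted graph
    apply hasPM_of_rel (delVerts G {x | x ∈ C.support})
      (fun p q => MRel M₁ p.1 q.1 ∨ MRel M₂ p.1 q.1)
    · rintro p q (h | h)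
      · exact Or.inl h.symm
      · exact Or.inr h.symm
    · rintro p q (h | h)
      · exact h.adj
      · exact h.adj
    · intro p
      by_cases hpX : p.1 ∈ X
      · have hpXc : p.1 ∉ Xᶜ := by simpa using hpX
        have hpT : (Sum.inl ⟨p.1, hpXc⟩ : {v : V // v ∉ Xᶜ} ⊕ Unit) ∈
            {x | x ∈ W₂.support}ᶜ := by
          intro h
          exact p.2 (hs₁C _ ((hT₂ _ _).1 h))
        obtain ⟨w, hw⟩ := MRel_exists hM₂ hinr₂ hpXc hpT
        have hwXc : w ∉ Xᶜ := hw.not_mem_Y.2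
        have hwT := hw.not_mem_T
        have hwC : w ∉ {x | x ∈ C.support} := by
          intro hc
          exact hwT ((hT₂ w hwXc).2 (hCpartS w hc (by simpa using hwXc)))
        refine ⟨⟨w, hwC⟩, Or.inr hw, ?_⟩
        rintro q (h | h)
        · exact absurd hpX h.not_mem_Y.1
        · exact Subtype.ext (h.unique hM₂.1 hw)
      · have hpT : (Sum.inl ⟨p.1, hpX⟩ : {v : V // v ∉ X} ⊕ Unit) ∈
            {x | x ∈ W₁.support}ᶜ := by
          intro h
          exact p.2 (hPC _ ((hT₁ _ _).1 h))
        obtain ⟨w, hw⟩ := MRel_exists hM₁ hinr₁ hpX hpT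
        have hwX : w ∉ X := hw.not_mem_Y.2
        have hwT := hw.not_mem_T
        have hwC : w ∉ {x | x ∈ C.support} :=
          fun hc => hwT ((hT₁ w hwX).2 (hCpartP w hc hwX))
        refine ⟨⟨w, hwC⟩, Or.inl hw, ?_⟩
        rintro q (h | h)
        · exact Subtype.ext (h.unique hM₁.1 hw)
        · exact absurd (show p.1 ∈ X by simpa using h.not_mem_Y.1) hpX
end

section
/- Let G be a bipartite graph with colour classes A and B, containing a subgraph H that is a bisubdivision of K_{2,3} (i.e. three internally disjoint u-v paths P₁, P₂, P₃, each of even length, between two vertices u, v of the same colour class). Suppose X ⊆ V(G) \ V(H) is nonempty, |X| is odd, and there exist distinct indices i, j ∈ {1,2,3} such that every edge of G with one endpoint in X has its other endpoint in X ∪ V(P_i ∪ P_j). Then the even cycle P_i ∪ P_j is not conformal in G, i.e. G - V(P_i ∪ P_j) has no perfect matching. In particular, G is not cycle-conformal. -/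
open SimpleGraph

/-- A bisubdivision of `K_{2,3}` with an odd separated set witnesses failure of
cycle-conformality: if `P 0, P 1, P 2` are internally disjoint even `u`-`v`
paths in a bipartite graph `G` (with `u, v` in the same colour class), and
`X` is a nonempty odd set of vertices outside the paths all of whose edges
leave only into `X ∪ V(P i ∪ P j)`, then the even cycle `P i ∪ P j` is not
conformal, and `G` is not cycle-conformal. -/
theorem bisubdivision_obstruction {V : Type*} [Fintype V] (G : SimpleGraph V)
    (col : G.Coloring Bool) (u v : V) (huv : u ≠ v) (hcol : col u = col v)
    (P : Fin 3 → G.Walk u v)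
    (hpath : ∀ k, (P k).IsPath) (heven : ∀ k, Even (P k).length)
    (hdisj : ∀ k l, k ≠ l →
      ∀ x, x ∈ (P k).support → x ∈ (P l).support → x = u ∨ x = v)
    (X : Set V) (hXne : X.Nonempty) (hXodd : Odd X.ncard)
    (hXdisj : ∀ x ∈ X, ∀ k, x ∉ (P k).support)
    (i j : Fin 3) (hij : i ≠ j)
    (hsep : ∀ x ∈ X, ∀ y : V, G.Adj x y →
      y ∈ X ∨ y ∈ (P i).support ∨ y ∈ (P j).support) :
    ¬ hasPM (delVerts G {x | x ∈ (P i).support ∨ x ∈ (P j).support}) ∧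
    ¬ cycleConformal G := by
  classical
  set S : Set V := {x | x ∈ (P i).support ∨ x ∈ (P j).support} with hS
  have hXS : X ⊆ Sᶜ := by
    intro x hx
    simp only [hS, Set.mem_compl_iff, Set.mem_setOf_eq, not_or]
    exact ⟨hXdisj x hx i, hXdisj x hx j⟩
  have part1 : ¬ hasPM (delVerts G S) := by
    rintro ⟨M, hM⟩
    have hclosed : ∀ a b : ↥Sᶜ, M.Adj a b → (↑a : V) ∈ X → (↑b : V) ∈ X := by
      intro a b hab ha
      have hGadj : G.Adj ↑a ↑b := by
        have := M.adj_sub hab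
        simpa [delVerts] using this
      rcases hsep ↑a ha ↑b hGadj with h | h | h
      · exact h
      · exact absurd (show (↑b : V) ∈ S from Or.inl h) b.2
      · exact absurd (show (↑b : V) ∈ S from Or.inr h) b.2
    set X' : Set ↥(Sᶜ) := Subtype.val ⁻¹' X with hX'
    let M' : (delVerts G S).Subgraph :=
      { verts := X'
        Adj := fun a b => M.Adj a b ∧ (↑a : V) ∈ X
        adj_sub := fun h => M.adj_sub h.1
        edge_vert := fun h => h.2
        symm := ⟨fun a b h => ⟨h.1.symm, hclosed a b h.1 h.2⟩⟩ }
    have hM' : M'.IsMatching := by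
      intro a ha
      obtain ⟨w, hw, huniq⟩ := hM.1 (hM.2 a)
      exact ⟨w, ⟨hw, ha⟩, fun y hy => huniq y hy.1⟩
    have heven : Even (M'.verts.toFinset.card) := hM'.even_card
    have himg : Subtype.val '' X' = X := by
      ext x
      constructor
      · rintro ⟨a, ha, rfl⟩; exact ha
      · intro hx; exact ⟨⟨x, hXS hx⟩, hx, rfl⟩
    have hcard : X'.ncard = X.ncard := by
      rw [← himg, Set.ncard_image_of_injective _ Subtype.val_injective]
    have : Even X.ncard := by
      rw [← hcard, Set.ncard_eq_toFinset_card']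
      exact heven
    exact (Nat.not_odd_iff_even.mpr this) hXodd
  refine ⟨part1, ?_⟩
  rintro ⟨-, h2⟩
  have hnoedge : ¬ G.Adj u v := fun h => (col.valid h) hcol
  set c : G.Walk u u := (P i).append (P j).reverse with hc
  have hedgedisj : ∀ e ∈ (P i).edges, e ∉ (P j).edges := by
    intro e hei hej
    induction e with
    | h a b =>
      have hab : G.Adj a b := (P i).edges_subset_edgeSet hei
      have hai : a ∈ (P i).support := (P i).fst_mem_support_of_mem_edges hei
      have hbi : b ∈ (P i).support := (P i).snd_mem_support_of_mem_edges hei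
      have haj : a ∈ (P j).support := (P j).fst_mem_support_of_mem_edges hej
      have hbj : b ∈ (P j).support := (P j).snd_mem_support_of_mem_edges hej
      rcases hdisj i j hij a hai haj with rfl | rfl <;>
        rcases hdisj i j hij b hbi hbj with rfl | rfl
      · exact hab.ne rfl
      · exact hnoedge hab
      · exact hnoedge hab.symm
      · exact hab.ne rfl
  have hu_not : u ∉ (P i).support.tail := by
    have h := (hpath i).support_nodup
    rw [Walk.support_eq_cons] at h
    exact (List.nodup_cons.mp h).1
  have hv_not : v ∉ (P j).reverse.support.tail := by
    have h := (hpath j).reverse.support_nodup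
    rw [Walk.support_eq_cons] at h
    exact (List.nodup_cons.mp h).1
  have hcyc : c.IsCycle := by
    rw [Walk.isCycle_def]
    refine ⟨⟨?_⟩, ?_, ?_⟩
    · rw [hc, Walk.edges_append, Walk.edges_reverse]
      refine List.Nodup.append (hpath i).isTrail.edges_nodup
        (List.nodup_reverse.mpr (hpath j).isTrail.edges_nodup) ?_
      intro e hei hej
      exact hedgedisj e hei (List.mem_reverse.mp hej)
    · intro hnil
      have h0 : c.length = 0 := by rw [hnil]; rfl
      rw [hc, Walk.length_append] at h0
      exact huv (Walk.eq_of_length_eq_zero (Nat.eq_zero_of_add_eq_zero_right h0))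
    · have hsupp : c.support = (P i).support ++ (P j).reverse.support.tail := by
        rw [hc, Walk.support_append]
      rw [hsupp, Walk.support_eq_cons (P i), List.cons_append, List.tail_cons]
      refine List.Nodup.append ((hpath i).support_nodup.tail)
        ((hpath j).reverse.support_nodup.tail) ?_
      intro x hxi hxj
      have hxi' : x ∈ (P i).support := List.mem_of_mem_tail hxi
      have hxj' : x ∈ (P j).support := by
        have := List.mem_of_mem_tail hxj
        rw [Walk.support_reverse, List.mem_reverse] at this
        exact this
      rcases hdisj i j hij x hxi' hxj' with rfl | rfl
      · exact hu_not hxi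
      · exact hv_not hxj
  have hevenc : Even c.length := by
    rw [hc, Walk.length_append, Walk.length_reverse]
    exact (heven i).add (heven j)
  have hkey := h2 u c hcyc hevenc
  have hsuppset : {x | x ∈ c.support} = S := by
    ext x
    simp only [Set.mem_setOf_eq, hc, Walk.mem_support_append_iff, hS,
      Walk.support_reverse, List.mem_reverse]
  rw [hsuppset] at hkey
  exact part1 hkey
end
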